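/- Let J be a binomial ideal of S = K[x_1,...,x_n] with a fixed monomial order admitting a Gröbner basis G_J consisting of binomials, and let E be a monomial ideal. Then there exists a monomial ideal F ⊇ E such that (J,F) is a Gröbner-nice pair (in(J+F) = in(J)+in(F)) and J + F = J + E. -/

import Mathlib

open MvPolynomial

variable {K : Type*} [Field K] {n : ℕ}

/-- The leading monomial (exponent vector) of a polynomial with respect to a monomial
order `m`: the maximum of the support; by convention `lm m 0 = 0`. -/
noncomputable def lm (m : MonomialOrder (Fin n)) (f : MvPolynomial (Fin n) K) :
    Fin n →₀ ℕ :=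
  m.toSyn.symm (f.support.sup fun d => m.toSyn d)

lemma lm_le_of_mem_support (m : MonomialOrder (Fin n)) {f : MvPolynomial (Fin n) K}
    {b : Fin n →₀ ℕ} (hb : b ∈ f.support) : m.toSyn b ≤ m.toSyn (lm m f) := by
  unfold lm
  rw [AddEquiv.apply_symm_apply]
  exact Finset.le_sup hb

lemma lm_mem_support (m : MonomialOrder (Fin n)) {f : MvPolynomial (Fin n) K}
    (hf : f ≠ 0) : lm m f ∈ f.support := by
  obtain ⟨b, hb, h⟩ := Finset.exists_mem_eq_sup f.support (support_nonempty.mpr hf)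
    (fun d => m.toSyn d)
  unfold lm
  rw [h, AddEquiv.symm_apply_apply]
  exact hb

lemma lm_monomial (m : MonomialOrder (Fin n)) (μ : Fin n →₀ ℕ) {c : K} (hc : c ≠ 0) :
    lm m (monomial μ c) = μ := by
  classical
  unfold lm
  rw [support_monomial, if_neg hc, Finset.sup_singleton, AddEquiv.symm_apply_apply]

lemma coeff_lm_ne_zero (m : MonomialOrder (Fin n)) {f : MvPolynomial (Fin n) K}
    (hf : f ≠ 0) : f.coeff (lm m f) ≠ 0 :=
  mem_support_iff.mp (lm_mem_support m hf)

/-- Term normal form of a monomial modulo an ideal with binomial generators. -/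
lemma keyNF (m : MonomialOrder (Fin n)) {J : Ideal (MvPolynomial (Fin n) K)}
    {GJ : Set (MvPolynomial (Fin n) K)} (hspan : Ideal.span GJ = J)
    (hbin : ∀ g ∈ GJ, g.support.card = 2) (μ : Fin n →₀ ℕ) :
    ∃ t : MvPolynomial (Fin n) K, (monomial μ (1:K)) - t ∈ J ∧ t.support.card ≤ 1 ∧
      ∀ τ ∈ t.support, ∀ g ∈ GJ, ¬ lm m g ≤ τ := by
  suffices H : ∀ s : m.syn, ∀ μ : Fin n →₀ ℕ, m.toSyn μ = s →
      ∃ t : MvPolynomial (Fin n) K, (monomial μ (1:K)) - t ∈ J ∧ t.support.card ≤ 1 ∧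
        ∀ τ ∈ t.support, ∀ g ∈ GJ, ¬ lm m g ≤ τ from H _ μ rfl
  intro s
  refine WellFoundedLT.induction (motive := fun s => ∀ μ : Fin n →₀ ℕ, m.toSyn μ = s →
      ∃ t : MvPolynomial (Fin n) K, (monomial μ (1:K)) - t ∈ J ∧ t.support.card ≤ 1 ∧
        ∀ τ ∈ t.support, ∀ g ∈ GJ, ¬ lm m g ≤ τ) s ?_
  clear μ s
  intro s IH μ hμs
  subst hμs
  by_cases hdiv : ∃ g ∈ GJ, lm m g ≤ μ
  · -- reduce the monomial by a binomial
    obtain ⟨g, hg, hle⟩ := hdiv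
    have hg2 := hbin g hg
    have hgne : g ≠ 0 := by
      intro h
      rw [h] at hg2
      simp at hg2
    -- binomial structure
    obtain ⟨α0, β0, hne0, hsupp0⟩ := Finset.card_eq_two.mp hg2
    have hlmem := lm_mem_support m hgne
    have hstruct : ∃ β, β ≠ lm m g ∧ g.support = {lm m g, β} := by
      rw [hsupp0] at hlmem
      rcases Finset.mem_insert.mp hlmem with h | h
      · exact ⟨β0, by rw [← h] at hne0; exact fun hc => hne0 hc.symm, by rw [hsupp0, h]⟩
      · rw [Finset.mem_singleton] at h
        exact ⟨α0, by rw [← h] at hne0; exact hne0, by rw [hsupp0, h, Finset.pair_comm]⟩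
    obtain ⟨β, hβne, hsupp⟩ := hstruct
    set α := lm m g with hα
    set a := g.coeff α with ha'
    set b := g.coeff β with hb'
    have ha : a ≠ 0 := coeff_lm_ne_zero m hgne
    have hb : b ≠ 0 := by
      rw [hb', ← mem_support_iff, hsupp]
      simp
    have hβlt : m.toSyn β < m.toSyn α := by
      have hle' : m.toSyn β ≤ m.toSyn α := lm_le_of_mem_support m (by rw [hsupp]; simp)
      rcases lt_or_eq_of_le hle' with h | h
      · exact h
      · exact absurd (m.toSyn.injective h) hβne
    -- g as a sum of two monomials
    have hgeq : g = monomial α a + monomial β (b) := by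
      conv_lhs => rw [as_sum g]
      rw [hsupp, Finset.sum_pair (fun hc => hβne hc.symm), ← ha', ← hb']
    set δ := μ - α with hδ
    have hδα : δ + α = μ := tsub_add_cancel_of_le hle
    set ν := δ + β with hν
    have hνlt : m.toSyn ν < m.toSyn μ := by
      rw [← hδα, hν, map_add, map_add]
      exact add_lt_add_right hβlt _
    obtain ⟨t', ht'J, ht'c, ht'd⟩ := IH (m.toSyn ν) hνlt ν rfl
    set c0 : K := -(a⁻¹ * b) with hc0
    have hc0ne : c0 ≠ 0 := by
      simp [hc0, ha, hb]
    refine ⟨C c0 * t', ?_, ?_, ?_⟩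
    · -- membership in J
      have hkey : monomial δ a⁻¹ * g =
          monomial μ (1:K) + monomial ν (a⁻¹ * b) := by
        conv_lhs => rw [hgeq]
        rw [mul_add, monomial_mul, monomial_mul, inv_mul_cancel₀ ha, hδα]
      have h1 : monomial δ a⁻¹ * g ∈ J := by
        rw [← hspan]
        exact Ideal.mul_mem_left _ _ (Ideal.subset_span hg)
      have h2 : C c0 * (monomial ν (1:K) - t') ∈ J := Ideal.mul_mem_left _ _ ht'J
      have heq : monomial μ (1:K) - C c0 * t' =
          monomial δ a⁻¹ * g + C c0 * (monomial ν (1:K) - t') := by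
        rw [hkey, mul_sub, C_mul_monomial, mul_one]
        have : monomial ν c0 = -monomial ν (a⁻¹ * b) := by
          rw [hc0, map_neg]
        rw [this]
        ring
      rw [heq]
      exact Ideal.add_mem _ h1 h2
    · -- support card
      calc (C c0 * t').support.card ≤ t'.support.card := by
            apply Finset.card_le_card
            intro τ hτ
            rw [mem_support_iff, coeff_C_mul] at hτ
            rw [mem_support_iff]
            exact fun h => hτ (by rw [h, mul_zero])
        _ ≤ 1 := ht'c
    · intro τ hτ
      apply ht'd
      rw [mem_support_iff, coeff_C_mul] at hτ
      rw [mem_support_iff]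
      exact fun h => hτ (by rw [h, mul_zero])
  · -- already in normal form
    push_neg at hdiv
    refine ⟨monomial μ (1:K), by simp, ?_, ?_⟩
    · exact le_trans (Finset.card_le_card support_monomial_subset) (by simp)
    · intro τ hτ
      have : τ = μ := Finset.mem_singleton.mp (support_monomial_subset hτ)
      rw [this]
      exact hdiv

/-- The initial ideal of `I`: the ideal generated by the leading monomials of the
nonzero elements of `I`. -/
noncomputable def initialIdeal (m : MonomialOrder (Fin n))
    (I : Ideal (MvPolynomial (Fin n) K)) : Ideal (MvPolynomial (Fin n) K) :=
  Ideal.span {p | ∃ f ∈ I, f ≠ 0 ∧ p = monomial (lm m f) (1 : K)}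

lemma mem_initialIdeal (m : MonomialOrder (Fin n)) {I : Ideal (MvPolynomial (Fin n) K)}
    {f : MvPolynomial (Fin n) K} (hf : f ∈ I) (hne : f ≠ 0) :
    monomial (lm m f) (1:K) ∈ initialIdeal m I :=
  Ideal.subset_span ⟨f, hf, hne, rfl⟩

lemma initialIdeal_mono (m : MonomialOrder (Fin n)) {I I' : Ideal (MvPolynomial (Fin n) K)}
    (h : I ≤ I') : initialIdeal m I ≤ initialIdeal m I' :=
  Ideal.span_mono (fun p hp => by obtain ⟨f, hf, hne, hp⟩ := hp; exact ⟨f, h hf, hne, hp⟩)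

/-- `G` is a Gröbner basis of `I`: a finite set of nonzero polynomials generating `I`
whose leading monomials generate the initial ideal of `I`. -/
def IsGroebnerBasis (m : MonomialOrder (Fin n)) (I : Ideal (MvPolynomial (Fin n) K))
    (G : Set (MvPolynomial (Fin n) K)) : Prop :=
  G.Finite ∧ (0 : MvPolynomial (Fin n) K) ∉ G ∧ Ideal.span G = I ∧
    Ideal.span ((fun g => monomial (lm m g) (1 : K)) '' G) = initialIdeal m I

/-- The S-polynomial `S(f,g)` with respect to the monomial order `m`. -/
noncomputable def sPoly (m : MonomialOrder (Fin n)) (f g : MvPolynomial (Fin n) K) :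
    MvPolynomial (Fin n) K :=
  monomial (lm m f ⊔ lm m g - lm m f) (f.coeff (lm m f))⁻¹ * f -
    monomial (lm m f ⊔ lm m g - lm m g) (g.coeff (lm m g))⁻¹ * g

/-- An ideal is a monomial ideal if it is generated by monomials. -/
def IsMonomialIdeal (I : Ideal (MvPolynomial (Fin n) K)) : Prop :=
  ∃ M : Set (Fin n →₀ ℕ), I = Ideal.span ((fun μ => (monomial μ (1 : K))) '' M)

lemma monomial_mem_of_mem_monomialIdeal {I : Ideal (MvPolynomial (Fin n) K)}
    (hI : IsMonomialIdeal I) {e : MvPolynomial (Fin n) K} (he : e ∈ I)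
    {b : Fin n →₀ ℕ} (hb : b ∈ e.support) : monomial b (1:K) ∈ I := by
  obtain ⟨M, rfl⟩ := hI
  obtain ⟨si, hsi, hle⟩ := mem_ideal_span_monomial_image.mp he b hb
  have h : monomial b (1:K) = monomial (b - si) 1 * monomial si 1 := by
    rw [monomial_mul, one_mul, tsub_add_cancel_of_le hle]
  rw [h]
  exact Ideal.mul_mem_left _ _ (Ideal.subset_span ⟨si, hsi, rfl⟩)

/-- The key claim: for `f ∈ J + E` nonzero, the leading monomial is either in the
initial ideal of `J` or, as a monomial, it belongs to `J + E`. -/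
lemma main_claim (m : MonomialOrder (Fin n)) {J E : Ideal (MvPolynomial (Fin n) K)}
    {GJ : Set (MvPolynomial (Fin n) K)} (hGJ : IsGroebnerBasis m J GJ)
    (hbin : ∀ g ∈ GJ, g.support.card = 2) (hE : IsMonomialIdeal E)
    {f : MvPolynomial (Fin n) K} (hf : f ∈ J + E) (hne : f ≠ 0) :
    monomial (lm m f) (1:K) ∈ initialIdeal m J ∨ monomial (lm m f) (1:K) ∈ J + E := by
  classical
  obtain ⟨hfin, h0, hspan, hinit⟩ := hGJ
  rw [Ideal.add_eq_sup] at hf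
  obtain ⟨j, hj, e, heE, rfl⟩ := Submodule.mem_sup.mp hf
  choose t htJ htc htd using keyNF m hspan hbin
  set r : MvPolynomial (Fin n) K := ∑ b ∈ e.support, C (e.coeff b) * t b with hr
  have herJ : e - r ∈ J := by
    have he2 : e = ∑ b ∈ e.support, C (e.coeff b) * monomial b (1:K) := by
      conv_lhs => rw [as_sum e]
      exact Finset.sum_congr rfl fun b _ => by rw [C_mul_monomial, mul_one]
    have : e - r = ∑ b ∈ e.support, C (e.coeff b) * (monomial b (1:K) - t b) := by
      conv_lhs => rw [he2]
      rw [hr, ← Finset.sum_sub_distrib]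
      exact Finset.sum_congr rfl fun b _ => by rw [mul_sub]
    rw [this]
    exact Ideal.sum_mem _ fun b _ => Ideal.mul_mem_left _ _ (htJ b)
  have hfrJ : (j + e) - r ∈ J := by
    have h := Ideal.add_mem J hj herJ
    have : j + (e - r) = (j + e) - r := by ring
    rwa [this] at h
  have hsuppr : ∀ τ ∈ r.support, ∃ b ∈ e.support, τ ∈ (t b).support := by
    intro τ hτ
    by_contra hcon
    push_neg at hcon
    apply mem_support_iff.mp hτ
    rw [hr, coeff_sum]
    refine Finset.sum_eq_zero fun b hb => ?_
    rw [coeff_C_mul, notMem_support_iff.mp (hcon b hb), mul_zero]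
  have hterm : ∀ b ∈ e.support, ∀ τ ∈ (t b).support,
      monomial τ (1:K) ∈ J ⊔ E := by
    intro b hb τ hτ
    have h1 : monomial b (1:K) ∈ E := monomial_mem_of_mem_monomialIdeal hE heE hb
    have htb : t b ∈ J ⊔ E := by
      have : t b = monomial b (1:K) - (monomial b (1:K) - t b) := by ring
      rw [this]
      exact sub_mem (Submodule.mem_sup_right h1) (Submodule.mem_sup_left (htJ b))
    have hsing : (t b).support = {τ} := by
      apply Finset.eq_singleton_iff_unique_mem.mpr
      exact ⟨hτ, fun x hx => Finset.card_le_one.mp (htc b) x hx τ hτ⟩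
    have htbeq : t b = monomial τ ((t b).coeff τ) := by
      conv_lhs => rw [as_sum (t b)]
      rw [hsing, Finset.sum_singleton]
    obtain ⟨c, hc, hcne⟩ : ∃ c, t b = monomial τ c ∧ c ≠ 0 :=
      ⟨(t b).coeff τ, htbeq, mem_support_iff.mp hτ⟩
    have h2 : monomial τ (1:K) = C c⁻¹ * t b := by
      rw [hc, C_mul_monomial, inv_mul_cancel₀ hcne]
    rw [h2]
    exact Ideal.mul_mem_left _ _ htb
  by_cases hσr : lm m (j + e) ∈ r.support
  · right
    obtain ⟨b, hb, hmem⟩ := hsuppr _ hσr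
    rw [Ideal.add_eq_sup]
    exact hterm b hb _ hmem
  · have hco : ((j + e) - r).coeff (lm m (j + e)) ≠ 0 := by
      rw [coeff_sub, notMem_support_iff.mp hσr, sub_zero]
      exact coeff_lm_ne_zero m hne
    have hfrne : (j + e) - r ≠ 0 := fun h => hco (by rw [h, coeff_zero])
    have h1 : monomial (lm m ((j + e) - r)) (1:K) ∈ initialIdeal m J :=
      mem_initialIdeal m hfrJ hfrne
    have hdiv : ∃ g ∈ GJ, lm m g ≤ lm m ((j + e) - r) := by
      rw [← hinit] at h1
      have himg : (fun g => monomial (lm m g) (1:K)) '' GJ =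
          (fun s => monomial s (1:K)) '' (lm m '' GJ) := by
        rw [Set.image_image]
      rw [himg] at h1
      obtain ⟨si, hsi, hle⟩ := mem_ideal_span_monomial_image.mp h1 (lm m ((j + e) - r))
        (by simp)
      obtain ⟨g, hg, rfl⟩ := hsi
      exact ⟨g, hg, hle⟩
    have hσle : m.toSyn (lm m (j + e)) ≤ m.toSyn (lm m ((j + e) - r)) :=
      lm_le_of_mem_support m (mem_support_iff.mpr hco)
    have hσ'mem : lm m ((j + e) - r) ∈ (j + e).support ∪ r.support :=
      support_sub _ _ _ (lm_mem_support m hfrne)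
    rcases Finset.mem_union.mp hσ'mem with h | h
    · have hle2 : m.toSyn (lm m ((j + e) - r)) ≤ m.toSyn (lm m (j + e)) :=
        lm_le_of_mem_support m h
      have heq : lm m ((j + e) - r) = lm m (j + e) :=
        m.toSyn.injective (le_antisymm hle2 hσle)
      left
      rw [← heq]
      exact h1
    · obtain ⟨b, hb, hmem⟩ := hsuppr _ h
      obtain ⟨g, hg, hle⟩ := hdiv
      exact absurd hle (htd b _ hmem g hg)

/-- If `J` has a Gröbner basis consisting of binomials and `E` is a monomial ideal,
then there is a monomial ideal `F ⊇ E` with `(J,F)` Gröbner-nice and `J + F = J + E`. -/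
theorem stmt19 (m : MonomialOrder (Fin n)) (J E : Ideal (MvPolynomial (Fin n) K))
    (GJ : Set (MvPolynomial (Fin n) K)) (hGJ : IsGroebnerBasis m J GJ)
    (hbin : ∀ g ∈ GJ, g.support.card = 2)
    (hE : IsMonomialIdeal E) :
    ∃ F : Ideal (MvPolynomial (Fin n) K), IsMonomialIdeal F ∧ E ≤ F ∧
      initialIdeal m (J + F) = initialIdeal m J + initialIdeal m F ∧
      J + F = J + E := by
  classical
  set S : Set (Fin n →₀ ℕ) := {ν | (monomial ν (1:K) : MvPolynomial (Fin n) K) ∈ J + E}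
    with hS
  set F : Ideal (MvPolynomial (Fin n) K) :=
    Ideal.span ((fun μ => (monomial μ (1 : K))) '' S) with hF
  have hFmon : IsMonomialIdeal F := ⟨S, hF⟩
  have hFle : F ≤ J + E := by
    rw [hF, Ideal.span_le]
    rintro p ⟨ν, hν, rfl⟩
    exact hν
  have hEF : E ≤ F := by
    intro e he
    rw [hF]
    apply mem_ideal_span_monomial_image.mpr
    intro b hb
    refine ⟨b, ?_, le_refl b⟩
    rw [hS]
    have : monomial b (1:K) ∈ E := monomial_mem_of_mem_monomialIdeal hE he hb
    rw [Ideal.add_eq_sup]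
    exact Submodule.mem_sup_right this
  have hJFE : J + F = J + E := by
    rw [Ideal.add_eq_sup, Ideal.add_eq_sup]
    apply le_antisymm
    · exact sup_le (le_sup_left) (by rw [← Ideal.add_eq_sup]; exact hFle)
    · exact sup_le le_sup_left (le_trans hEF le_sup_right)
  refine ⟨F, hFmon, hEF, ?_, hJFE⟩
  apply le_antisymm
  · -- hard inclusion
    rw [initialIdeal, Ideal.span_le]
    rintro p ⟨f, hfJF, hne, rfl⟩
    rw [hJFE] at hfJF
    rcases main_claim m hGJ hbin hE hfJF hne with h | h
    · rw [Ideal.add_eq_sup]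
      exact Submodule.mem_sup_left h
    · rw [Ideal.add_eq_sup]
      apply Submodule.mem_sup_right
      have hmemF : monomial (lm m f) (1:K) ∈ F := by
        rw [hF]
        exact Ideal.subset_span ⟨lm m f, h, rfl⟩
      have h1 : lm m (monomial (lm m f) (1:K)) = lm m f := lm_monomial m _ one_ne_zero
      have := mem_initialIdeal m hmemF (by simp [monomial_eq_zero])
      rwa [h1] at this
  · rw [Ideal.add_eq_sup, Ideal.add_eq_sup]
    apply sup_le
    · exact initialIdeal_mono m le_sup_left
    · exact initialIdeal_mono m le_sup_right
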